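/- Let H > 0, let 0 < ε < η < 1/2, and let M ∈ ℝ with M < 1 − 2η. Let π : [0, H] → [0, 1] be a function, let x : [0, H] → ℝ take values in {0, 1}, and let 𝕏 be a nonempty compact subset of [0, H] × [0, 1] ⊆ ℝ². Let t ∈ [0, H] and assume: (i) min(π(t), 1 − π(t)) ≤ ε; (ii) the Hausdorff distance (for the Euclidean distance on ℝ²) between the graph {(u, π(u)) : u ∈ [0, H]} and 𝕏 is at most ε; (iii) for every (s, y) ∈ 𝕏 with |s − t| ≤ ε one has |y − x(s)| ≤ M; (iv) for every s ∈ [0, H] with |s − t| ≤ ε one has x(s) = x(t). Then |π(t) − x(t)| ≤ ε. -/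

import Mathlib

open Set

lemma coord_abs_le_dist (a b : EuclideanSpace ℝ (Fin 2)) (i : Fin 2) :
    |a i - b i| ≤ dist a b := by
  rw [EuclideanSpace.dist_eq]
  simp only [Real.dist_eq]
  rw [← Real.sqrt_sq_eq_abs (a i - b i)]
  apply Real.sqrt_le_sqrt
  calc (a i - b i)^2 = |a i - b i|^2 := (sq_abs _).symm
    _ ≤ ∑ j, |a j - b j|^2 := Finset.single_le_sum (f := fun j => |a j - b j|^2)
        (fun j _ => sq_nonneg _) (Finset.mem_univ i)

lemma graph_bounded (H : ℝ) (hH : 0 < H) (π : ℝ → ℝ)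
    (hπ : ∀ u ∈ Set.Icc (0 : ℝ) H, π u ∈ Set.Icc (0 : ℝ) 1) :
    Bornology.IsBounded {p : EuclideanSpace ℝ (Fin 2) | ∃ u ∈ Set.Icc (0 : ℝ) H,
        p = (!₂[u, π u] : EuclideanSpace ℝ (Fin 2))} := by
  apply Bornology.IsBounded.subset (Metric.isBounded_closedBall (x := (0 : EuclideanSpace ℝ (Fin 2))) (r := H + 1))
  rintro p ⟨u, hu, rfl⟩
  have hπu := hπ u hu
  simp only [Metric.mem_closedBall]
  rw [EuclideanSpace.dist_eq, Fin.sum_univ_two]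
  simp only [Real.dist_eq]
  have h0 : (![u, π u] : Fin 2 → ℝ) 0 = u := rfl
  have h1 : (![u, π u] : Fin 2 → ℝ) 1 = π u := rfl
  have hz : ∀ i, (0 : EuclideanSpace ℝ (Fin 2)) i = 0 := fun _ => rfl
  rw [h0, h1, hz, hz]
  have e0 : |u - 0|^2 = u^2 := by rw [sq_abs]; ring
  have e1 : |π u - 0|^2 = (π u)^2 := by rw [sq_abs]; ring
  rw [e0, e1]
  have : u^2 + (π u)^2 ≤ (H+1)^2 := by nlinarith [hu.1, hu.2, hπu.1, hπu.2]
  calc Real.sqrt (u^2 + (π u)^2) ≤ Real.sqrt ((H+1)^2) := Real.sqrt_le_sqrt this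
    _ = H + 1 := Real.sqrt_sq (by linarith)

/-- Deterministic reduction lemma: outside excursion intervals, Hausdorff proximity of the
graph of the filter to the spike set forces `π(t)` to be `ε`-close to the hidden state. -/
theorem filter_close_to_hidden_state_outside_excursions
    (H ε η M : ℝ) (hH : 0 < H) (hε : 0 < ε) (hεη : ε < η) (hη : η < 1 / 2)
    (hM : M < 1 - 2 * η)
    (π x : ℝ → ℝ)
    (hπ : ∀ u ∈ Set.Icc (0 : ℝ) H, π u ∈ Set.Icc (0 : ℝ) 1)
    (hx : ∀ s ∈ Set.Icc (0 : ℝ) H, x s = 0 ∨ x s = 1)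
    (𝕏 : Set (EuclideanSpace ℝ (Fin 2)))
    (h𝕏ne : 𝕏.Nonempty) (h𝕏c : IsCompact 𝕏)
    (h𝕏sub : ∀ p ∈ 𝕏, p 0 ∈ Set.Icc (0 : ℝ) H ∧ p 1 ∈ Set.Icc (0 : ℝ) 1)
    (t : ℝ) (ht : t ∈ Set.Icc (0 : ℝ) H)
    (h1 : min (π t) (1 - π t) ≤ ε)
    (h2 : Metric.hausdorffDist
      {p : EuclideanSpace ℝ (Fin 2) | ∃ u ∈ Set.Icc (0 : ℝ) H,
        p = (!₂[u, π u] : EuclideanSpace ℝ (Fin 2))} 𝕏 ≤ ε)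
    (h3 : ∀ p ∈ 𝕏, |p 0 - t| ≤ ε → |p 1 - x (p 0)| ≤ M)
    (h4 : ∀ s ∈ Set.Icc (0 : ℝ) H, |s - t| ≤ ε → x s = x t) :
    |π t - x t| ≤ ε := by
  set G : Set (EuclideanSpace ℝ (Fin 2)) :=
    {p : EuclideanSpace ℝ (Fin 2) | ∃ u ∈ Set.Icc (0 : ℝ) H,
        p = (!₂[u, π u] : EuclideanSpace ℝ (Fin 2))} with hG
  have hq : ∃ q : EuclideanSpace ℝ (Fin 2), q = (!₂[t, π t] : EuclideanSpace ℝ (Fin 2)) := ⟨_, rfl⟩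
  obtain ⟨q, hqdef⟩ := hq
  have hGmem : q ∈ G := ⟨t, ht, hqdef⟩
  have hq0 : q 0 = t := by rw [hqdef]; rfl
  have hq1 : q 1 = π t := by rw [hqdef]; rfl
  have hfin : EMetric.hausdorffEdist G 𝕏 ≠ ⊤ :=
    Metric.hausdorffEdist_ne_top_of_nonempty_of_bounded ⟨_, hGmem⟩ h𝕏ne
      (graph_bounded H hH π hπ) h𝕏c.isBounded
  obtain ⟨p, hp𝕏, hpeq⟩ := h𝕏c.exists_infDist_eq_dist h𝕏ne q
  have hpd : dist q p ≤ ε := by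
    rw [← hpeq]
    exact (Metric.infDist_le_hausdorffDist_of_mem hGmem hfin).trans h2
  have hc0 : |t - p 0| ≤ ε := by
    have := (coord_abs_le_dist q p 0).trans hpd
    rwa [hq0] at this
  have hc1 : |π t - p 1| ≤ ε := by
    have := (coord_abs_le_dist q p 1).trans hpd
    rwa [hq1] at this
  have hp0 : |p 0 - t| ≤ ε := by rw [abs_sub_comm]; exact hc0
  have hpM : |p 1 - x (p 0)| ≤ M := h3 p hp𝕏 hp0
  have hxeq : x (p 0) = x t := h4 (p 0) (h𝕏sub p hp𝕏).1 hp0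
  rw [hxeq] at hpM
  have hπt := hπ t ht
  have habs := abs_le.1 hpM
  have hc1' := abs_le.1 hc1
  rcases hx t ht with hxt | hxt
  · -- x t = 0, so π t ≤ M + ε < 1 - η, hence min forces π t ≤ ε
    rw [hxt] at hpM ⊢
    rw [sub_zero, abs_of_nonneg (by linarith [hπt.1] : (0:ℝ) ≤ π t)]
    rcases le_or_gt (π t) ε with h | h
    · exact h
    · exfalso
      have : π t ≤ ε + (M + 0) := by
        have := (abs_le.1 hpM).2
        linarith [hc1'.2]
      have h1' : 1 - π t ≤ ε := by
        rcases min_le_iff.1 h1 with h' | h'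
        · linarith
        · exact h'
      linarith
  · rw [hxt] at hpM ⊢
    have habs' := abs_le.1 hpM
    rcases le_or_gt (π t) ε with h | h
    · exfalso
      have : 1 - π t ≥ 1 - ε := by linarith
      have : π t ≥ 1 - M - ε := by linarith [hc1'.2, habs'.1]
      linarith
    · have h1' : 1 - π t ≤ ε := by
        rcases min_le_iff.1 h1 with h' | h'
        · linarith
        · exact h'
      rw [abs_le]
      constructor <;> linarith [hπt.2]
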